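/- arXiv:1911.12737 — 2 statements merged into one kernel-verified Lean document; each statement's English description precedes it below -/
import Mathlib

section
/- Preservation of the LL(1) property under derivatives: for every LL(1) syntax s : Syntax A (i.e. ¬HasConflict s) and every token t with kind t ∈ First s, the derivative δ t s is again LL(1), i.e. ¬HasConflict (δ t s). -/
set_option autoImplicit false

/-- Context-free syntaxes (value-aware context-free expressions). -/
inductive Syn (Token Kind : Type) (Var : Type → Type) : Type → Type 1 where
  | elem (k : Kind) : Syn Token Kind Var Token
  | fail {A : Type} : Syn Token Kind Var A
  | eps {A : Type} (v : A) : Syn Token Kind Var A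
  | disj {A : Type} (s₁ s₂ : Syn Token Kind Var A) : Syn Token Kind Var A
  | seqn {A B : Type} (s₁ : Syn Token Kind Var A) (s₂ : Syn Token Kind Var B) :
      Syn Token Kind Var (A × B)
  | map {A B : Type} (f : A → B) (s : Syn Token Kind Var A) : Syn Token Kind Var B
  | var {A : Type} (x : Var A) : Syn Token Kind Var A

section

variable {Token Kind : Type} {Var : Type → Type}
variable (kd : Token → Kind) (env : ∀ A : Type, Var A → Syn Token Kind Var A)

/-- Semantics of syntaxes. -/
inductive Matches : ∀ {A : Type}, Syn Token Kind Var A → List Token → A → Prop where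
  | elem {k : Kind} {t : Token} (h : kd t = k) : Matches (Syn.elem k) [t] t
  | eps {A : Type} (v : A) : Matches (Syn.eps v) [] v
  | disjL {A : Type} {s₁ s₂ : Syn Token Kind Var A} {ts : List Token} {v : A} :
      Matches s₁ ts v → Matches (Syn.disj s₁ s₂) ts v
  | disjR {A : Type} {s₁ s₂ : Syn Token Kind Var A} {ts : List Token} {v : A} :
      Matches s₂ ts v → Matches (Syn.disj s₁ s₂) ts v
  | seqn {A B : Type} {s₁ : Syn Token Kind Var A} {s₂ : Syn Token Kind Var B}
      {ts₁ ts₂ : List Token} {v₁ : A} {v₂ : B} :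
      Matches s₁ ts₁ v₁ → Matches s₂ ts₂ v₂ →
      Matches (Syn.seqn s₁ s₂) (ts₁ ++ ts₂) (v₁, v₂)
  | map {A B : Type} (f : A → B) {s : Syn Token Kind Var A} {ts : List Token} {v : A} :
      Matches s ts v → Matches (Syn.map f s) ts (f v)
  | var {A : Type} (x : Var A) {ts : List Token} {v : A} :
      Matches (env A x) ts v → Matches (Syn.var x) ts v

/-- Productivity. -/
inductive Productive : ∀ {A : Type}, Syn Token Kind Var A → Prop where
  | eps {A : Type} (v : A) : Productive (Syn.eps v)
  | elem (k : Kind) : Productive (Syn.elem k)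
  | disjL {A : Type} {s₁ s₂ : Syn Token Kind Var A} :
      Productive s₁ → Productive (Syn.disj s₁ s₂)
  | disjR {A : Type} {s₁ s₂ : Syn Token Kind Var A} :
      Productive s₂ → Productive (Syn.disj s₁ s₂)
  | seqn {A B : Type} {s₁ : Syn Token Kind Var A} {s₂ : Syn Token Kind Var B} :
      Productive s₁ → Productive s₂ → Productive (Syn.seqn s₁ s₂)
  | map {A B : Type} (f : A → B) {s : Syn Token Kind Var A} :
      Productive s → Productive (Syn.map f s)
  | var {A : Type} (x : Var A) : Productive (env A x) → Productive (Syn.var x)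

/-- Nullability, with associated value. -/
inductive Nullable : ∀ {A : Type}, Syn Token Kind Var A → A → Prop where
  | eps {A : Type} (v : A) : Nullable (Syn.eps v) v
  | disjL {A : Type} {s₁ s₂ : Syn Token Kind Var A} {v : A} :
      Nullable s₁ v → Nullable (Syn.disj s₁ s₂) v
  | disjR {A : Type} {s₁ s₂ : Syn Token Kind Var A} {v : A} :
      Nullable s₂ v → Nullable (Syn.disj s₁ s₂) v
  | seqn {A B : Type} {s₁ : Syn Token Kind Var A} {s₂ : Syn Token Kind Var B} {v₁ : A} {v₂ : B} :
      Nullable s₁ v₁ → Nullable s₂ v₂ → Nullable (Syn.seqn s₁ s₂) (v₁, v₂)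
  | map {A B : Type} (f : A → B) {s : Syn Token Kind Var A} {v : A} :
      Nullable s v → Nullable (Syn.map f s) (f v)
  | var {A : Type} (x : Var A) {v : A} : Nullable (env A x) v → Nullable (Syn.var x) v

/-- First sets: `InFirst env k s` means `k ∈ First s`. -/
inductive InFirst : ∀ {A : Type}, Kind → Syn Token Kind Var A → Prop where
  | elem (k : Kind) : InFirst k (Syn.elem k)
  | disjL {A : Type} {k : Kind} {s₁ s₂ : Syn Token Kind Var A} :
      InFirst k s₁ → InFirst k (Syn.disj s₁ s₂)
  | disjR {A : Type} {k : Kind} {s₁ s₂ : Syn Token Kind Var A} :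
      InFirst k s₂ → InFirst k (Syn.disj s₁ s₂)
  | seqnL {A B : Type} {k : Kind} {s₁ : Syn Token Kind Var A} {s₂ : Syn Token Kind Var B} :
      InFirst k s₁ → Productive env s₂ → InFirst k (Syn.seqn s₁ s₂)
  | seqnR {A B : Type} {k : Kind} {s₁ : Syn Token Kind Var A} {s₂ : Syn Token Kind Var B}
      {v : A} : Nullable env s₁ v → InFirst k s₂ → InFirst k (Syn.seqn s₁ s₂)
  | map {A B : Type} {k : Kind} (f : A → B) {s : Syn Token Kind Var A} :
      InFirst k s → InFirst k (Syn.map f s)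
  | var {A : Type} {k : Kind} (x : Var A) : InFirst k (env A x) → InFirst k (Syn.var x)

/-- Should-not-follow sets: `InSNF env k s` means `k ∈ ShouldNotFollow s`. -/
inductive InSNF : ∀ {A : Type}, Kind → Syn Token Kind Var A → Prop where
  | disjL {A : Type} {k : Kind} {s₁ s₂ : Syn Token Kind Var A} :
      InSNF k s₁ → InSNF k (Syn.disj s₁ s₂)
  | disjR {A : Type} {k : Kind} {s₁ s₂ : Syn Token Kind Var A} :
      InSNF k s₂ → InSNF k (Syn.disj s₁ s₂)
  | disjFN {A : Type} {k : Kind} {s₁ s₂ : Syn Token Kind Var A} {v : A} :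
      InFirst env k s₁ → Nullable env s₂ v → InSNF k (Syn.disj s₁ s₂)
  | disjNF {A : Type} {k : Kind} {s₁ s₂ : Syn Token Kind Var A} {v : A} :
      Nullable env s₁ v → InFirst env k s₂ → InSNF k (Syn.disj s₁ s₂)
  | seqnL {A B : Type} {k : Kind} {s₁ : Syn Token Kind Var A} {s₂ : Syn Token Kind Var B}
      {v : B} : InSNF k s₁ → Nullable env s₂ v → InSNF k (Syn.seqn s₁ s₂)
  | seqnR {A B : Type} {k : Kind} {s₁ : Syn Token Kind Var A} {s₂ : Syn Token Kind Var B} :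
      Productive env s₁ → InSNF k s₂ → InSNF k (Syn.seqn s₁ s₂)
  | map {A B : Type} {k : Kind} (f : A → B) {s : Syn Token Kind Var A} :
      InSNF k s → InSNF k (Syn.map f s)
  | var {A : Type} {k : Kind} (x : Var A) : InSNF k (env A x) → InSNF k (Syn.var x)

/-- LL(1) conflicts. A syntax `s` is LL(1) iff `¬ HasConflict env s`. -/
inductive HasConflict : ∀ {A : Type}, Syn Token Kind Var A → Prop where
  | disjNN {A : Type} {s₁ s₂ : Syn Token Kind Var A} {v₁ v₂ : A} :
      Nullable env s₁ v₁ → Nullable env s₂ v₂ → HasConflict (Syn.disj s₁ s₂)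
  | disjFF {A : Type} {s₁ s₂ : Syn Token Kind Var A} {k : Kind} :
      InFirst env k s₁ → InFirst env k s₂ → HasConflict (Syn.disj s₁ s₂)
  | disjL {A : Type} {s₁ s₂ : Syn Token Kind Var A} :
      HasConflict s₁ → HasConflict (Syn.disj s₁ s₂)
  | disjR {A : Type} {s₁ s₂ : Syn Token Kind Var A} :
      HasConflict s₂ → HasConflict (Syn.disj s₁ s₂)
  | seqnSF {A B : Type} {s₁ : Syn Token Kind Var A} {s₂ : Syn Token Kind Var B} {k : Kind} :
      InSNF env k s₁ → InFirst env k s₂ → HasConflict (Syn.seqn s₁ s₂)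
  | seqnL {A B : Type} {s₁ : Syn Token Kind Var A} {s₂ : Syn Token Kind Var B} :
      HasConflict s₁ → HasConflict (Syn.seqn s₁ s₂)
  | seqnR {A B : Type} {s₁ : Syn Token Kind Var A} {s₂ : Syn Token Kind Var B} :
      HasConflict s₂ → HasConflict (Syn.seqn s₁ s₂)
  | map {A B : Type} (f : A → B) {s : Syn Token Kind Var A} :
      HasConflict s → HasConflict (Syn.map f s)
  | var {A : Type} (x : Var A) : HasConflict (env A x) → HasConflict (Syn.var x)

end

/-- Layers of a context, with above type `A` and below type `B`. -/
inductive Layer (Token Kind : Type) (Var : Type → Type) : Type → Type → Type 1 where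
  | apply {A B : Type} (f : A → B) : Layer Token Kind Var A B
  | prepend {A C : Type} (v : C) : Layer Token Kind Var A (C × A)
  | followBy {A C : Type} (s : Syn Token Kind Var C) : Layer Token Kind Var A (A × C)

/-- Type-aligned contexts (stacks of layers). -/
inductive Ctx (Token Kind : Type) (Var : Type → Type) : Type → Type → Type 1 where
  | nil {A : Type} : Ctx Token Kind Var A A
  | cons {A B C : Type} (l : Layer Token Kind Var A B) (c : Ctx Token Kind Var B C) :
      Ctx Token Kind Var A C

section

variable {Token Kind : Type} {Var : Type → Type}

def Ctx.isNil : ∀ {A B : Type}, Ctx Token Kind Var A B → Bool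
  | _, _, Ctx.nil => true
  | _, _, Ctx.cons _ _ => false

/-- Unfocusing a focused syntax. -/
def unfocus : ∀ {A B : Type}, Syn Token Kind Var A → Ctx Token Kind Var A B →
    Syn Token Kind Var B
  | _, _, s, Ctx.nil => s
  | _, _, s, Ctx.cons (Layer.apply f) c => unfocus (Syn.map f s) c
  | _, _, s, Ctx.cons (Layer.prepend v) c => unfocus (Syn.seqn (Syn.eps v) s) c
  | _, _, s, Ctx.cons (Layer.followBy s') c => unfocus (Syn.seqn s s') c

/-- Focused syntaxes with below type `B`. -/
def Focused (Token Kind : Type) (Var : Type → Type) (B : Type) : Type 1 :=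
  (A : Type) × Syn Token Kind Var A × Ctx Token Kind Var A B

def unfocusF {B : Type} (fs : Focused Token Kind Var B) : Syn Token Kind Var B :=
  unfocus fs.2.1 fs.2.2

def focusF {A : Type} (s : Syn Token Kind Var A) : Focused Token Kind Var A :=
  ⟨A, s, Ctx.nil⟩

/-- Plugging a value into a context. -/
def plug : ∀ {A B : Type}, A → Ctx Token Kind Var A B → Focused Token Kind Var B
  | A, _, v, Ctx.nil => ⟨A, Syn.eps v, Ctx.nil⟩
  | _, _, v, Ctx.cons (Layer.apply f) c => plug (f v) c
  | _, _, v, Ctx.cons (Layer.prepend v') c => plug (v', v) c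
  | _, _, v, Ctx.cons (Layer.followBy s) c => ⟨_, s, Ctx.cons (Layer.prepend v) c⟩

end

section

variable {Token Kind : Type} {Var : Type → Type}
variable (kd : Token → Kind) (env : ∀ A : Type, Var A → Syn Token Kind Var A)

theorem nullable_productive {A : Type} {s : Syn Token Kind Var A} {v : A}
    (h : Nullable env s v) : Productive env s := by
  induction h with
  | eps v => exact .eps v
  | disjL _ ih => exact .disjL ih
  | disjR _ ih => exact .disjR ih
  | seqn _ _ ih1 ih2 => exact .seqn ih1 ih2
  | map f _ ih => exact .map f ih
  | var x _ ih => exact .var x ih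

theorem first_productive {A : Type} {k : Kind} {s : Syn Token Kind Var A}
    (h : InFirst env k s) : Productive env s := by
  induction h with
  | elem k => exact .elem k
  | disjL _ ih => exact .disjL ih
  | disjR _ ih => exact .disjR ih
  | seqnL _ hp ih => exact .seqn ih hp
  | seqnR hn _ ih => exact .seqn (nullable_productive env hn) ih
  | map f _ ih => exact .map f ih
  | var x _ ih => exact .var x ih

def NInvSeq : ∀ {C : Type}, Syn Token Kind Var C → C → Prop
  | _, Syn.seqn s₁ s₂, v => Nullable env s₁ v.1 ∧ Nullable env s₂ v.2
  | _, _, _ => True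

theorem nullable_inv_aux {C : Type} {s : Syn Token Kind Var C} {w : C}
    (h : Nullable env s w) : NInvSeq env s w := by
  cases h <;> first | exact ⟨‹_›, ‹_›⟩ | trivial

theorem nullable_inv_seqn {A B : Type} {s₁ : Syn Token Kind Var A}
    {s₂ : Syn Token Kind Var B} {v : A × B}
    (h : Nullable env (Syn.seqn s₁ s₂) v) :
    Nullable env s₁ v.1 ∧ Nullable env s₂ v.2 :=
  nullable_inv_aux env h

def CInvSeq : ∀ {C : Type}, Syn Token Kind Var C → Prop
  | _, Syn.seqn s₁ s₂ =>
      (∃ k, InSNF env k s₁ ∧ InFirst env k s₂) ∨ HasConflict env s₁ ∨ HasConflict env s₂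
  | _, _ => True

theorem conflict_inv_aux {C : Type} {s : Syn Token Kind Var C}
    (h : HasConflict env s) : CInvSeq env s := by
  cases h with
  | seqnSF h1 h2 => exact Or.inl ⟨_, h1, h2⟩
  | seqnL h1 => exact Or.inr (Or.inl h1)
  | seqnR h1 => exact Or.inr (Or.inr h1)
  | _ => trivial

theorem conflict_inv_seqn {A B : Type} {s₁ : Syn Token Kind Var A}
    {s₂ : Syn Token Kind Var B}
    (h : HasConflict env (Syn.seqn s₁ s₂)) :
    (∃ k, InSNF env k s₁ ∧ InFirst env k s₂) ∨
      HasConflict env s₁ ∨ HasConflict env s₂ :=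
  conflict_inv_aux env h

def SInvSeq (k : Kind) : ∀ {C : Type}, Syn Token Kind Var C → Prop
  | _, Syn.seqn s₁ s₂ =>
      (∃ v, InSNF env k s₁ ∧ Nullable env s₂ v) ∨ (Productive env s₁ ∧ InSNF env k s₂)
  | _, _ => True

theorem snf_inv_aux {C : Type} {k : Kind} {s : Syn Token Kind Var C}
    (h : InSNF env k s) : SInvSeq env k s := by
  cases h with
  | seqnL h1 h2 => exact Or.inl ⟨_, h1, h2⟩
  | seqnR h1 h2 => exact Or.inr ⟨h1, h2⟩
  | _ => trivial

theorem snf_inv_seqn {A B : Type} {k : Kind} {s₁ : Syn Token Kind Var A}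
    {s₂ : Syn Token Kind Var B}
    (h : InSNF env k (Syn.seqn s₁ s₂)) :
    (∃ v, InSNF env k s₁ ∧ Nullable env s₂ v) ∨
      (Productive env s₁ ∧ InSNF env k s₂) :=
  snf_inv_aux env h

theorem nullable_first_snf {A : Type} {k : Kind} {s : Syn Token Kind Var A}
    (hf : InFirst env k s) :
    ∀ {v : A}, Nullable env s v → ¬ HasConflict env s → InSNF env k s := by
  induction hf with
  | elem k => intro v hn _; cases hn
  | disjL h ih =>
    intro v hn hc
    cases hn with
    | disjL hn1 => exact .disjL (ih hn1 (fun h => hc (.disjL h)))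
    | disjR hn2 => exact .disjFN h hn2
  | disjR h ih =>
    intro v hn hc
    cases hn with
    | disjL hn1 => exact .disjNF hn1 h
    | disjR hn2 => exact .disjR (ih hn2 (fun h => hc (.disjR h)))
  | seqnL h hp ih =>
    intro v hn hc
    obtain ⟨hn1, hn2⟩ := nullable_inv_seqn env hn
    exact .seqnL (ih hn1 (fun h => hc (.seqnL h))) hn2
  | seqnR hn1 h ih =>
    intro v hn hc
    obtain ⟨hna, hnb⟩ := nullable_inv_seqn env hn
    exact .seqnR (nullable_productive env hna) (ih hnb (fun h => hc (.seqnR h)))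
  | map f h ih =>
    intro v hn hc
    cases hn with
    | map _ hn' => exact .map f (ih hn' (fun h => hc (.map f h)))
  | var x h ih =>
    intro v hn hc
    cases hn with
    | var _ hn' => exact .var x (ih hn' (fun h => hc (.var x h)))

theorem derive_preserves_ll1
    (nullOpt : ∀ {A : Type}, Syn Token Kind Var A → Option A)
    (hnull : ∀ {A : Type} (s : Syn Token Kind Var A), ¬ HasConflict env s →
      ∀ v : A, nullOpt s = some v ↔ Nullable env s v)
    (delta : ∀ {A : Type}, Token → Syn Token Kind Var A → Syn Token Kind Var A)
    (hdelta_elem : ∀ (t : Token) (k : Kind),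
      ¬ HasConflict env (Syn.elem k : Syn Token Kind Var Token) →
      InFirst env (kd t) (Syn.elem k : Syn Token Kind Var Token) →
      delta t (Syn.elem k) = Syn.eps t)
    (hdelta_disj₁ : ∀ {A : Type} (t : Token) (s₁ s₂ : Syn Token Kind Var A),
      ¬ HasConflict env (Syn.disj s₁ s₂) → InFirst env (kd t) (Syn.disj s₁ s₂) →
      InFirst env (kd t) s₁ → delta t (Syn.disj s₁ s₂) = delta t s₁)
    (hdelta_disj₂ : ∀ {A : Type} (t : Token) (s₁ s₂ : Syn Token Kind Var A),
      ¬ HasConflict env (Syn.disj s₁ s₂) → InFirst env (kd t) (Syn.disj s₁ s₂) →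
      ¬ InFirst env (kd t) s₁ → delta t (Syn.disj s₁ s₂) = delta t s₂)
    (hdelta_seqn₁ : ∀ {A B : Type} (t : Token) (s₁ : Syn Token Kind Var A)
      (s₂ : Syn Token Kind Var B) (v : A),
      ¬ HasConflict env (Syn.seqn s₁ s₂) → InFirst env (kd t) (Syn.seqn s₁ s₂) →
      nullOpt s₁ = some v → InFirst env (kd t) s₂ →
      delta t (Syn.seqn s₁ s₂) = Syn.seqn (Syn.eps v) (delta t s₂))
    (hdelta_seqn₂ : ∀ {A B : Type} (t : Token) (s₁ : Syn Token Kind Var A)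
      (s₂ : Syn Token Kind Var B),
      ¬ HasConflict env (Syn.seqn s₁ s₂) → InFirst env (kd t) (Syn.seqn s₁ s₂) →
      (∀ v : A, nullOpt s₁ = some v → ¬ InFirst env (kd t) s₂) →
      delta t (Syn.seqn s₁ s₂) = Syn.seqn (delta t s₁) s₂)
    (hdelta_map : ∀ {A B : Type} (t : Token) (f : A → B) (s : Syn Token Kind Var A),
      ¬ HasConflict env (Syn.map f s) → InFirst env (kd t) (Syn.map f s) →
      delta t (Syn.map f s) = Syn.map f (delta t s))
    (hdelta_var : ∀ {A : Type} (t : Token) (x : Var A),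
      ¬ HasConflict env (Syn.var x : Syn Token Kind Var A) →
      InFirst env (kd t) (Syn.var x : Syn Token Kind Var A) →
      delta t (Syn.var x) = delta t (env A x))
    {A : Type} (s : Syn Token Kind Var A) (t : Token)
    (hs : ¬ HasConflict env s) (hf : InFirst env (kd t) s) :
    ¬ HasConflict env (delta t s) := by
  have key : ∀ {A : Type} (s : Syn Token Kind Var A) (k0 : Kind), InFirst env k0 s →
      k0 = kd t → ¬ HasConflict env s →
      (¬ HasConflict env (delta t s)) ∧
        (∀ k, InSNF env k (delta t s) → InSNF env k s) := by
    intro A s k0 hf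
    induction hf with
    | elem =>
      intro hke hc
      subst hke
      rw [hdelta_elem t _ hc (.elem _)]
      refine ⟨fun h => ?_, fun k h => ?_⟩ <;> cases h
    | disjL h ih =>
      intro hke hc
      subst hke
      have hc1 : ¬ HasConflict env _ := fun x => hc (.disjL x)
      rw [hdelta_disj₁ t _ _ hc (.disjL h) h]
      obtain ⟨ih1, ih2⟩ := ih rfl hc1
      exact ⟨ih1, fun k hk => .disjL (ih2 k hk)⟩
    | disjR h ih =>
      intro hke hc
      subst hke
      have hc2 : ¬ HasConflict env _ := fun x => hc (.disjR x)
      have hnf1 : ¬ InFirst env (kd t) _ := fun hx => hc (.disjFF hx h)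
      rw [hdelta_disj₂ t _ _ hc (.disjR h) hnf1]
      obtain ⟨ih1, ih2⟩ := ih rfl hc2
      exact ⟨ih1, fun k hk => .disjR (ih2 k hk)⟩
    | seqnL h hp ih =>
      rename_i A1 B1 s₁ s₂
      intro hke hc
      subst hke
      have hc1 : ¬ HasConflict env s₁ := fun x => hc (.seqnL x)
      have hnone : ∀ v, nullOpt s₁ = some v → ¬ InFirst env (kd t) s₂ := by
        intro v hv hf2
        exact hc (.seqnSF (nullable_first_snf env h ((hnull _ hc1 v).mp hv) hc1) hf2)
      rw [hdelta_seqn₂ t _ _ hc (.seqnL h hp) hnone]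
      obtain ⟨ih1, ih2⟩ := ih rfl hc1
      constructor
      · intro hcon
        rcases conflict_inv_seqn env hcon with ⟨k, hsnf, hf2⟩ | h' | h'
        · exact hc (.seqnSF (ih2 _ hsnf) hf2)
        · exact ih1 h'
        · exact hc (.seqnR h')
      · intro k hk
        rcases snf_inv_seqn env hk with ⟨v, hsnf, hn2⟩ | ⟨_, hsnf2⟩
        · exact .seqnL (ih2 _ hsnf) hn2
        · exact .seqnR (first_productive env h) hsnf2
    | seqnR hn h ih =>
      intro hke hc
      subst hke
      have hc1 : ¬ HasConflict env _ := fun x => hc (.seqnL x)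
      have hc2 : ¬ HasConflict env _ := fun x => hc (.seqnR x)
      have hsome := (hnull _ hc1 _).mpr hn
      rw [hdelta_seqn₁ t _ _ _ hc (.seqnR hn h) hsome h]
      obtain ⟨ih1, ih2⟩ := ih rfl hc2
      constructor
      · intro hcon
        rcases conflict_inv_seqn env hcon with ⟨k, hsnf, _⟩ | h' | h'
        · cases hsnf
        · cases h'
        · exact ih1 h'
      · intro k hk
        rcases snf_inv_seqn env hk with ⟨v', hsnf, _⟩ | ⟨_, hsnf2⟩
        · cases hsnf
        · exact .seqnR (nullable_productive env hn) (ih2 _ hsnf2)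
    | map f h ih =>
      intro hke hc
      subst hke
      have hc1 : ¬ HasConflict env _ := fun x => hc (.map f x)
      rw [hdelta_map t f _ hc (.map f h)]
      obtain ⟨ih1, ih2⟩ := ih rfl hc1
      constructor
      · intro hcon
        cases hcon with
        | map _ h' => exact ih1 h'
      · intro k hk
        cases hk with
        | map _ h' => exact .map f (ih2 _ h')
    | var x h ih =>
      intro hke hc
      subst hke
      have hce : ¬ HasConflict env _ := fun x' => hc (.var x x')
      rw [hdelta_var t x hc (.var x h)]
      obtain ⟨ih1, ih2⟩ := ih rfl hce
      exact ⟨ih1, fun k hk => .var x (ih2 k hk)⟩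
  exact (key s (kd t) hf rfl hs).1

end
end

section
/- Plugging a value into a context preserves meaning: for every context c : Context A B, value v : A, token sequence ts and value w : B, Matches (unfocus (plug v c)) ts w if and only if Matches (unfocus (epsilon v, c)) ts w. -/
set_option autoImplicit false

section

variable {Token Kind : Type} {Var : Type → Type}
variable (kd : Token → Kind) (env : ∀ A : Type, Var A → Syn Token Kind Var A)

def fstTy : ∀ {T : Type}, Syn Token Kind Var T → Type
  | _, @Syn.seqn _ _ _ A _ _ _ => A
  | T, _ => T

def sndTy : ∀ {T : Type}, Syn Token Kind Var T → Type
  | _, @Syn.seqn _ _ _ _ B _ _ => B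
  | T, _ => T

theorem fstTy_heq {T₁ T₂ : Type} (x : Syn Token Kind Var T₁) (y : Syn Token Kind Var T₂)
    (h1 : T₁ = T₂) (h2 : HEq x y) : fstTy x = fstTy y := by
  subst h1; cases h2; rfl

theorem sndTy_heq {T₁ T₂ : Type} (x : Syn Token Kind Var T₁) (y : Syn Token Kind Var T₂)
    (h1 : T₁ = T₂) (h2 : HEq x y) : sndTy x = sndTy y := by
  subst h1; cases h2; rfl

theorem seqn_inv_aux {T : Type} {s : Syn Token Kind Var T} {ts : List Token} {v : T}
    (hm : Matches kd env s ts v) :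
    ∀ {A B : Type} (s₁ : Syn Token Kind Var A) (s₂ : Syn Token Kind Var B) (w : A × B),
      (⟨T, s⟩ : (T' : Type) × Syn Token Kind Var T') = ⟨A × B, Syn.seqn s₁ s₂⟩ →
      (⟨T, v⟩ : (T' : Type) × T') = ⟨A × B, w⟩ →
      ∃ ts₁ ts₂ v₁ v₂, ts = ts₁ ++ ts₂ ∧ w = (v₁, v₂) ∧
        Matches kd env s₁ ts₁ v₁ ∧ Matches kd env s₂ ts₂ v₂ := by
  induction hm <;> intro A B s₁ s₂ w hsyn hval
  all_goals try (injection hsyn with h1 h2; subst h1; injection (eq_of_heq h2))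
  case seqn A₀ B₀ a b ts₁ ts₂ v₁ v₂ ha hb iha ihb =>
    injection hsyn with h1 h2
    have hA : A₀ = A := fstTy_heq (Syn.seqn a b) (Syn.seqn s₁ s₂) h1 h2
    have hB : B₀ = B := sndTy_heq (Syn.seqn a b) (Syn.seqn s₁ s₂) h1 h2
    subst hA; subst hB
    injection hval with h1' h2'
    have hv : (v₁, v₂) = w := h2'
    have hs : Syn.seqn a b = Syn.seqn s₁ s₂ := eq_of_heq h2
    injection hs with _ _ e1 e2
    exact ⟨ts₁, ts₂, v₁, v₂, rfl, hv.symm,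
      e1 ▸ ha, e2 ▸ hb⟩

theorem matches_seqn_inv {A B : Type} {s₁ : Syn Token Kind Var A} {s₂ : Syn Token Kind Var B}
    {ts : List Token} {w : A × B} (h : Matches kd env (Syn.seqn s₁ s₂) ts w) :
    ∃ ts₁ ts₂ v₁ v₂, ts = ts₁ ++ ts₂ ∧ w = (v₁, v₂) ∧
      Matches kd env s₁ ts₁ v₁ ∧ Matches kd env s₂ ts₂ v₂ :=
  seqn_inv_aux kd env h s₁ s₂ w rfl rfl

theorem matches_eps_inv {A : Type} {v : A} {ts : List Token} {w : A}
    (h : Matches kd env (Syn.eps v) ts w) : ts = [] ∧ w = v := by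
  cases h; exact ⟨rfl, rfl⟩

theorem unfocus_congr :
    ∀ {A B : Type} (c : Ctx Token Kind Var A B) {s₁ s₂ : Syn Token Kind Var A},
      (∀ ts v, Matches kd env s₁ ts v ↔ Matches kd env s₂ ts v) →
      ∀ ts w, Matches kd env (unfocus s₁ c) ts w ↔ Matches kd env (unfocus s₂ c) ts w
  | _, _, Ctx.nil, _, _, h, ts, w => h ts w
  | _, _, Ctx.cons (Layer.apply f) c, s₁, s₂, h, ts, w => by
    apply unfocus_congr c _ ts w
    intro ts v
    constructor
    · intro hm
      cases hm with
      | map f hm' => exact Matches.map f ((h _ _).mp hm')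
    · intro hm
      cases hm with
      | map f hm' => exact Matches.map f ((h _ _).mpr hm')
  | _, _, Ctx.cons (Layer.prepend v') c, s₁, s₂, h, ts, w => by
    apply unfocus_congr c _ ts w
    intro ts v
    constructor
    · intro hm
      obtain ⟨ts₁, ts₂, v₁, v₂, rfl, rfl, h1, h2⟩ := matches_seqn_inv kd env hm
      exact Matches.seqn h1 ((h _ _).mp h2)
    · intro hm
      obtain ⟨ts₁, ts₂, v₁, v₂, rfl, rfl, h1, h2⟩ := matches_seqn_inv kd env hm
      exact Matches.seqn h1 ((h _ _).mpr h2)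
  | _, _, Ctx.cons (Layer.followBy s') c, s₁, s₂, h, ts, w => by
    apply unfocus_congr c _ ts w
    intro ts v
    constructor
    · intro hm
      obtain ⟨ts₁, ts₂, v₁, v₂, rfl, rfl, h1, h2⟩ := matches_seqn_inv kd env hm
      exact Matches.seqn ((h _ _).mp h1) h2
    · intro hm
      obtain ⟨ts₁, ts₂, v₁, v₂, rfl, rfl, h1, h2⟩ := matches_seqn_inv kd env hm
      exact Matches.seqn ((h _ _).mpr h1) h2

theorem plug_correct
    {A B : Type} (c : Ctx Token Kind Var A B) (v : A) (ts : List Token) (w : B) :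
    Matches kd env (unfocusF (plug v c)) ts w ↔
      Matches kd env (unfocus (Syn.eps v) c) ts w := by
  induction c with
  | nil => exact Iff.rfl
  | cons l c ih =>
    cases l with
    | apply f =>
      rw [show plug v (Ctx.cons (Layer.apply f) c) = plug (f v) c from rfl]
      rw [ih (f v)]
      apply unfocus_congr kd env c
      intro ts u
      constructor
      · intro hm
        cases hm
        exact Matches.map f (Matches.eps v)
      · intro hm
        cases hm with
        | map f hm' => cases hm'; exact Matches.eps _
    | prepend v' =>
      rw [show plug v (Ctx.cons (Layer.prepend v') c) = plug (v', v) c from rfl]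
      rw [ih (v', v)]
      apply unfocus_congr kd env c
      intro ts u
      constructor
      · intro hm
        obtain ⟨rfl, rfl⟩ := matches_eps_inv kd env hm
        exact Matches.seqn (Matches.eps v') (Matches.eps v)
      · intro hm
        obtain ⟨ts₁, ts₂, v₁, v₂, rfl, he, h1, h2⟩ := matches_seqn_inv kd env hm
        cases h1; cases h2; cases he; exact Matches.eps _
    | followBy s => exact Iff.rfl

end
end
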